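/- Let N : ℝ → ℝ be differentiable, q : ℝ → ℝ differentiable with q'(s) = N(q(s)) for all s, and let (σ, ρ) be an extremal on an interval (a, t₁) with N(q(σ(t))) > 0 and σ'(t) ≠ 0 for all t, first integrals C₀ = −N(q(σ))(σ'² + ρ'²) < 0 and C₁ = −N(q(σ))ρ' ≠ 0 evaluated at some base point, and C₂ = C₀/C₁² < 0. If N(q(σ(t))) → +∞ as t → t₁, then ρ'(t)/σ'(t) → 0 as t → t₁. (Extremals of general type approach a singular boundary, where the conformal factor blows up, at right angle.) -/

import Mathlib

private lemma const_on_Ioo {f : ℝ → ℝ} {a b : ℝ}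
    (h : ∀ t ∈ Set.Ioo a b, HasDerivAt f 0 t)
    {x y : ℝ} (hx : x ∈ Set.Ioo a b) (hy : y ∈ Set.Ioo a b) : f x = f y := by
  apply (convex_Ioo a b).is_const_of_fderivWithin_eq_zero
    (fun t ht => (h t ht).differentiableAt.differentiableWithinAt) _ hx hy
  intro z hz
  rw [fderivWithin_of_isOpen isOpen_Ioo hz, ((h z hz).hasFDerivAt).fderiv]
  ext u
  simp

/-- Extremals of general type approach a singular boundary, where the conformal
factor `N(q(σ))` blows up, at right angle: if along an extremal on `(a, t₁)`
with `N(q(σ)) > 0`, `σ' ≠ 0`, first integrals `C₀ < 0`, `C₁ ≠ 0` and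
`C₂ = C₀/C₁² < 0`, one has `N(q(σ(t))) → ∞` as `t → t₁⁻`, then
`ρ'(t)/σ'(t) → 0` as `t → t₁⁻`. -/
theorem right_angle_at_singular_boundary
    (N q σ ρ : ℝ → ℝ) (a t₁ : ℝ) (ha : a < t₁)
    (hN : Differentiable ℝ N)
    (hq : Differentiable ℝ q) (hq' : ∀ s, deriv q s = N (q s))
    (hσ : ∀ t ∈ Set.Ioo a t₁, DifferentiableAt ℝ σ t)
    (hσ'' : ∀ t ∈ Set.Ioo a t₁, DifferentiableAt ℝ (deriv σ) t)
    (hρ : ∀ t ∈ Set.Ioo a t₁, DifferentiableAt ℝ ρ t)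
    (hρ'' : ∀ t ∈ Set.Ioo a t₁, DifferentiableAt ℝ (deriv ρ) t)
    (hext1 : ∀ t ∈ Set.Ioo a t₁, deriv (deriv σ) t
      = (1 / 2) * deriv N (q (σ t)) * ((deriv ρ t) ^ 2 - (deriv σ t) ^ 2))
    (hext2 : ∀ t ∈ Set.Ioo a t₁, deriv (deriv ρ) t
      = -(deriv N (q (σ t)) * deriv σ t * deriv ρ t))
    (hNpos : ∀ t ∈ Set.Ioo a t₁, 0 < N (q (σ t)))
    (hσne : ∀ t ∈ Set.Ioo a t₁, deriv σ t ≠ 0)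
    (t₀ : ℝ) (ht₀ : t₀ ∈ Set.Ioo a t₁) (C₀ C₁ : ℝ)
    (hC₀ : C₀ = -(N (q (σ t₀))) * ((deriv σ t₀) ^ 2 + (deriv ρ t₀) ^ 2))
    (hC₁ : C₁ = -(N (q (σ t₀))) * deriv ρ t₀)
    (hC₀neg : C₀ < 0) (hC₁ne : C₁ ≠ 0) (hC₂neg : C₀ / C₁ ^ 2 < 0)
    (hblow : Filter.Tendsto (fun t => N (q (σ t)))
      (nhdsWithin t₁ (Set.Iio t₁)) Filter.atTop) :
    Filter.Tendsto (fun t => deriv ρ t / deriv σ t)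
      (nhdsWithin t₁ (Set.Iio t₁)) (nhds 0) := by
  -- derivative of the conformal factor along the curve
  have hNt' : ∀ t ∈ Set.Ioo a t₁, HasDerivAt (fun t => N (q (σ t)))
      (deriv N (q (σ t)) * (N (q (σ t)) * deriv σ t)) t := by
    intro t ht
    have h1 : HasDerivAt σ (deriv σ t) t := (hσ t ht).hasDerivAt
    have h2 : HasDerivAt q (N (q (σ t))) (σ t) := (hq' (σ t)) ▸ (hq (σ t)).hasDerivAt
    have h3 : HasDerivAt N (deriv N (q (σ t))) (q (σ t)) := (hN _).hasDerivAt
    exact h3.comp t (h2.comp t h1)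
  -- conservation of C₁
  have hF : ∀ t ∈ Set.Ioo a t₁,
      N (q (σ t)) * deriv ρ t = N (q (σ t₀)) * deriv ρ t₀ := by
    intro t ht
    refine const_on_Ioo (f := fun t => N (q (σ t)) * deriv ρ t) ?_ ht ht₀
    intro s hs
    have h : HasDerivAt (fun t => N (q (σ t)) * deriv ρ t) _ s :=
      (hNt' s hs).mul ((hρ'' s hs).hasDerivAt)
    rw [hext2 s hs] at h
    convert h using 1
    ring
  -- conservation of C₀
  have hG : ∀ t ∈ Set.Ioo a t₁,
      N (q (σ t)) * ((deriv σ t) ^ 2 + (deriv ρ t) ^ 2)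
        = N (q (σ t₀)) * ((deriv σ t₀) ^ 2 + (deriv ρ t₀) ^ 2) := by
    intro t ht
    refine const_on_Ioo
      (f := fun t => N (q (σ t)) * ((deriv σ t) ^ 2 + (deriv ρ t) ^ 2)) ?_ ht ht₀
    intro s hs
    have hσd : HasDerivAt (fun u => (deriv σ u) ^ 2)
        (2 * (deriv σ s) ^ 1 * deriv (deriv σ) s) s :=
      ((hσ'' s hs).hasDerivAt).pow 2
    have hρd : HasDerivAt (fun u => (deriv ρ u) ^ 2)
        (2 * (deriv ρ s) ^ 1 * deriv (deriv ρ) s) s :=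
      ((hρ'' s hs).hasDerivAt).pow 2
    have h : HasDerivAt
        (fun t => N (q (σ t)) * ((deriv σ t) ^ 2 + (deriv ρ t) ^ 2)) _ s :=
      (hNt' s hs).mul (hσd.add hρd)
    rw [hext1 s hs, hext2 s hs] at h
    convert h using 1
    ring
  -- the ratio squared in terms of N
  have key : ∀ t ∈ Set.Ioo a t₁, 0 < -C₀ * N (q (σ t)) - C₁ ^ 2 →
      |deriv ρ t / deriv σ t| = Real.sqrt (C₁ ^ 2 / (-C₀ * N (q (σ t)) - C₁ ^ 2)) := by
    intro t ht hpos
    have hNt := hNpos t ht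
    have hNne : N (q (σ t)) ≠ 0 := ne_of_gt hNt
    have hσt := hσne t ht
    have h1 : N (q (σ t)) * deriv ρ t = -C₁ := by
      rw [hF t ht, hC₁]; ring
    have h2 : N (q (σ t)) * ((deriv σ t) ^ 2 + (deriv ρ t) ^ 2) = -C₀ := by
      rw [hG t ht, hC₀]; ring
    have hsq : (deriv ρ t / deriv σ t) ^ 2
        = C₁ ^ 2 / (-C₀ * N (q (σ t)) - C₁ ^ 2) := by
      have hρt : deriv ρ t = -C₁ / N (q (σ t)) := by
        field_simp; linarith [h1]
      have hσsq : (deriv σ t) ^ 2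
          = (-C₀ * N (q (σ t)) - C₁ ^ 2) / (N (q (σ t))) ^ 2 := by
        rw [hρt] at h2
        field_simp at h2 ⊢
        nlinarith [h2]
      rw [div_pow, hρt, hσsq]
      field_simp
    rw [← Real.sqrt_sq_eq_abs, hsq]
  -- the bound tends to zero
  have hbound : Filter.Tendsto
      (fun t => Real.sqrt (C₁ ^ 2 / (-C₀ * N (q (σ t)) - C₁ ^ 2)))
      (nhdsWithin t₁ (Set.Iio t₁)) (nhds 0) := by
    have hden : Filter.Tendsto (fun t => -C₀ * N (q (σ t)) - C₁ ^ 2)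
        (nhdsWithin t₁ (Set.Iio t₁)) Filter.atTop := by
      apply Filter.tendsto_atTop_add_const_right
      exact (hblow.const_mul_atTop (by linarith : (0:ℝ) < -C₀))
    have hin : Filter.Tendsto (fun t => C₁ ^ 2 / (-C₀ * N (q (σ t)) - C₁ ^ 2))
        (nhdsWithin t₁ (Set.Iio t₁)) (nhds 0) :=
      Filter.Tendsto.div_atTop tendsto_const_nhds hden
    have := (Real.continuous_sqrt.tendsto 0).comp hin
    simpa [Function.comp_def] using this
  -- eventually the abs equals the bound
  rw [tendsto_zero_iff_abs_tendsto_zero]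
  apply hbound.congr'
  have hIoo : Set.Ioo a t₁ ∈ nhdsWithin t₁ (Set.Iio t₁) :=
    Ioo_mem_nhdsLT_of_mem ⟨ha, le_refl t₁⟩
  have hbig : ∀ᶠ t in nhdsWithin t₁ (Set.Iio t₁),
      (C₁ ^ 2 + 1) / (-C₀) ≤ N (q (σ t)) :=
    hblow.eventually_ge_atTop _
  filter_upwards [hIoo, hbig] with t ht hb
  have hpos : 0 < -C₀ * N (q (σ t)) - C₁ ^ 2 := by
    have h0 : (0:ℝ) < -C₀ := by linarith
    have := (div_le_iff₀ h0).mp hb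
    nlinarith
  exact (key t ht hpos).symm
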